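/- Let H ⊆ H′ be partial building sets in a geometric lattice L (with respect to a building set G). If S ⊆ H′ is H′-nested, then the blow-down Π(S) = {h ∈ H : h ≤ π(g) for some g ∈ S} is H-nested, where π : L(L,H′) → L(L,H) is the blow-down map and elements of H, H′ are identified with atoms of the respective blown-up semilattices. -/

import Mathlib

/-- A finite lattice is geometric if it is atomistic and (upper) semimodular. -/
def IsGeomLat (L : Type) [Lattice L] [BoundedOrder L] [Fintype L] : Prop :=
  (∀ x : L, IsLUB {a : L | IsAtom a ∧ a ≤ x} x) ∧
  ∀ a b : L, a ⊓ b ⋖ a → b ⋖ a ⊔ b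

/-- The set of factors `F(L,G;x) = max G_{≤x}` of an element `x` with respect to
a subset `G ⊆ L`. -/
def factorsOf {L : Type} [Lattice L] [BoundedOrder L] (G : Set L) (x : L) : Set L :=
  {g | g ∈ G ∧ g ≤ x ∧ ∀ h ∈ G, h ≤ x → g ≤ h → g = h}

/-- A combinatorial building set in a (geometric) lattice `L`: a set `G` of
elements `> ⊥` such that for each `x > ⊥`, the join map from the product of the
lower intervals `[⊥, g]`, `g ∈ max G_{≤x}`, to `[⊥, x]` is a poset isomorphism
sending the `g`-th "unit vector" to `g`. -/
def IsBuildingSet (L : Type) [Lattice L] [BoundedOrder L] [Fintype L] [DecidableEq L]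
    (G : Set L) : Prop :=
  (∀ g ∈ G, ⊥ < g) ∧
  ∀ x : L, ⊥ < x →
    ∃ φ : ((g : factorsOf G x) → ↥(Set.Iic (g : L))) ≃o ↥(Set.Iic x),
      ∀ g : factorsOf G x,
        φ (fun h => if hh : h = g then ⟨(g : L), by simp [hh]⟩ else ⟨⊥, bot_le⟩) =
          ⟨(g : L), g.2.2.1⟩

/-- A partial building set `H` inside a building set `G`: `H ⊆ G`, `H` contains
all atoms, and the non-atomic part of `H` is an order filter of `G`. -/
def IsPartialBuilding (L : Type) [Lattice L] [BoundedOrder L] [Fintype L] [DecidableEq L]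
    (G H : Set L) : Prop :=
  H ⊆ G ∧ {a : L | IsAtom a} ⊆ H ∧
  ∀ g ∈ H, ¬ IsAtom g → ∀ h ∈ G, g ≤ h → h ∈ H

/-- `N` is `H`-nested: every antichain in `N` with at least two elements has its
join (computed in `L`) outside of `H`. -/
def IsNestedIn (L : Type) [Lattice L] [OrderBot L] (H : Set L) (N : Set L) : Prop :=
  ∀ S : Finset L, ↑S ⊆ N → 2 ≤ S.card → IsAntichain (· ≤ ·) (S : Set L) →
    S.sup id ∉ H

open Classical in
/-- One step of the blow-down map `Π` on subsets of a partial building set: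
undoing the blowup at `p` replaces `p` (if present) by the atoms of `L`
below `p`; this agrees with `Π(S) = {h ∈ H : h ≤ π(g) for some g ∈ S}`. -/
noncomputable def PiStep {L : Type} [Lattice L] [OrderBot L] (p : L) (S : Set L) : Set L :=
  if p ∈ S then (S \ {p}) ∪ {a : L | IsAtom a ∧ a ≤ p} else S

/-- The composite blow-down map `Π^{H'}_H`, undoing the blowups at the elements
of `H' ∖ H` (listed in the order in which they are undone, i.e. reverse
blowup order). -/
noncomputable def PiComp {L : Type} [Lattice L] [OrderBot L] (l : List L) (S : Set L) :
    Set L :=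
  l.foldl (fun T q => PiStep q T) S

/-- if `H ⊆ H'` are partial building sets in a geometric lattice
`L` and `S ⊆ H'` is `H'`-nested, then the blow-down `Π^{H'}_H(S)` is a subset of
`H` and is `H`-nested. -/

lemma exists_factor_above' {L : Type} [Lattice L] [BoundedOrder L]
    [Fintype L] [DecidableEq L] {G : Set L} {x g : L}
    (hg : g ∈ G) (hgx : g ≤ x) : ∃ f ∈ factorsOf G x, g ≤ f := by
  classical
  have hfin : ({k ∈ G | k ≤ x ∧ g ≤ k} : Set L).Finite := Set.toFinite _
  obtain ⟨f, hf, hmax⟩ : ∃ f ∈ ({k ∈ G | k ≤ x ∧ g ≤ k} : Set L),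
      ∀ a' ∈ ({k ∈ G | k ≤ x ∧ g ≤ k} : Set L), id f ≤ id a' → id f = id a' := by
    obtain ⟨f, hf1, hf2⟩ := hfin.exists_maximal ⟨g, hg, hgx, le_rfl⟩
    exact ⟨f, hf1, fun a ha hfa => le_antisymm hfa (hf2 ha hfa)⟩
  refine ⟨f, ⟨hf.1, hf.2.1, fun h hh hhx hfh => ?_⟩, hf.2.2⟩
  exact hmax h ⟨hh, hhx, le_trans hf.2.2 hfh⟩ hfh

lemma join_mem_of_inf_ne_bot' {L : Type} [Lattice L] [BoundedOrder L]
    [Fintype L] [DecidableEq L] {G : Set L} (hG : IsBuildingSet L G)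
    {g h : L} (hg : g ∈ G) (hh : h ∈ G) (hne : g ⊓ h ≠ ⊥) : g ⊔ h ∈ G := by
  classical
  set x := g ⊔ h with hx
  have hxpos : ⊥ < x := lt_of_lt_of_le (hG.1 g hg) le_sup_left
  obtain ⟨φ, hφ⟩ := hG.2 x hxpos
  obtain ⟨f₁, hf₁, hgf₁⟩ := exists_factor_above' (G := G) hg (le_sup_left : g ≤ x)
  obtain ⟨f₂, hf₂, hhf₂⟩ := exists_factor_above' (G := G) hh (le_sup_right : h ≤ x)
  by_cases hff : f₁ = f₂
  · have h1 : x ≤ f₁ := sup_le hgf₁ (hff ▸ hhf₂)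
    have h2 : f₁ = x := le_antisymm hf₁.2.1 h1
    exact h2 ▸ hf₁.1
  · exfalso
    apply hne
    set F₁ : factorsOf G x := ⟨f₁, hf₁⟩
    set F₂ : factorsOf G x := ⟨f₂, hf₂⟩
    have hFF : F₁ ≠ F₂ := fun e => hff (congrArg Subtype.val e)
    set u : (c : factorsOf G x) → ↥(Set.Iic (c : L)) :=
      fun c => if hh : c = F₁ then ⟨(F₁ : L), by simp [hh]⟩ else ⟨⊥, bot_le⟩
    set v : (c : factorsOf G x) → ↥(Set.Iic (c : L)) :=
      fun c => if hh : c = F₂ then ⟨(F₂ : L), by simp [hh]⟩ else ⟨⊥, bot_le⟩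
    have huv : u ⊓ v = ⊥ := by
      funext c
      by_cases h1 : c = F₁
      · have h2 : c ≠ F₂ := h1 ▸ hFF
        simp only [Pi.inf_apply, Pi.bot_apply, u, v, dif_pos h1, dif_neg h2]
        apply Subtype.ext
        simp
      · simp only [Pi.inf_apply, Pi.bot_apply, u, v, dif_neg h1]
        apply Subtype.ext
        simp
    have h1 : φ u = ⟨f₁, hf₁.2.1⟩ := hφ F₁
    have h2 : φ v = ⟨f₂, hf₂.2.1⟩ := hφ F₂
    have h3 : φ (u ⊓ v) = φ u ⊓ φ v := OrderIso.map_inf φ u v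
    rw [huv, OrderIso.map_bot, h1, h2] at h3
    have h4 : (⊥ : ↥(Set.Iic x)) = (⟨f₁, hf₁.2.1⟩ ⊓ ⟨f₂, hf₂.2.1⟩ : ↥(Set.Iic x)) := h3
    have h5 : (⊥ : L) = f₁ ⊓ f₂ := congrArg Subtype.val h4
    have h6 : g ⊓ h ≤ f₁ ⊓ f₂ := inf_le_inf hgf₁ hhf₂
    rw [← h5] at h6
    exact le_bot_iff.mp h6

lemma step_lemma' {L : Type} [Lattice L] [BoundedOrder L] [Fintype L] [DecidableEq L]
    {G H'' : Set L}
    (hG1 : ∀ g ∈ G, ⊥ < g)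
    (hA : ∀ g ∈ G, ∀ h ∈ G, g ⊓ h ≠ ⊥ → g ⊔ h ∈ G)
    (hsubG : H'' ⊆ G)
    (hatoms : ∀ a : L, IsAtom a → a ∈ H'')
    (hfilt : ∀ g ∈ H'', ¬ IsAtom g → ∀ h ∈ G, g ≤ h → h ∈ H'')
    {q : L} (hq : q ∈ H'') (hqA : ¬ IsAtom q)
    (hmin : ∀ x ∈ H'', x < q → IsAtom x)
    {T : Set L} (hT : T ⊆ H'') (hTn : IsNestedIn L H'' T) :
    PiStep q T ⊆ H'' \ {q} ∧ IsNestedIn L (H'' \ {q}) (PiStep q T) := by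
  classical
  unfold PiStep
  by_cases hqT : q ∈ T
  swap
  · rw [if_neg hqT]
    refine ⟨fun x hx => ⟨hT hx, fun e => hqT ((Set.mem_singleton_iff.mp e) ▸ hx)⟩,
      fun S hSsub hScard hSanti hmem => ?_⟩
    exact hTn S hSsub hScard hSanti hmem.1
  rw [if_pos hqT]
  set T' : Set L := (T \ {q}) ∪ {a : L | IsAtom a ∧ a ≤ q} with hT'
  have hsubset : T' ⊆ H'' \ {q} := by
    rintro x (⟨hx, hxq⟩ | ⟨hxa, hxle⟩)
    · exact ⟨hT hx, hxq⟩
    · exact ⟨hatoms x hxa, fun e => hqA ((Set.mem_singleton_iff.mp e) ▸ hxa)⟩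
  refine ⟨hsubset, fun S hSsub hScard hSanti hjmem => ?_⟩
  set j : L := S.sup id with hj
  have hSpos : ∀ x ∈ S, ⊥ < x := fun x hx =>
    hG1 x (hsubG (hsubset (hSsub hx)).1)
  have hjA : ¬ IsAtom j := by
    intro hja
    obtain ⟨x, hx, y, hy, hxy⟩ := Finset.one_lt_card.mp hScard
    have hxj : x ≤ j := Finset.le_sup (f := id) hx
    have hyj : y ≤ j := Finset.le_sup (f := id) hy
    have hx' : x = j := ((hja.le_iff.mp hxj).resolve_left (hSpos x hx).ne')
    have hy' : y = j := ((hja.le_iff.mp hyj).resolve_left (hSpos y hy).ne')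
    exact hxy (hx'.trans hy'.symm)
  have hjH : j ∈ H'' := hjmem.1
  have hjq : j ≠ q := fun e => hjmem.2 (Set.mem_singleton_iff.mpr e)
  set D : Finset L := S.filter (· ≤ q) with hD
  set E : Finset L := S.filter (fun x => ¬ x ≤ q) with hE
  by_cases hDne : D = ∅
  · have hSub : ↑S ⊆ T := by
      intro x hx
      rcases hSsub hx with h1 | h2
      · exact h1.1
      · exfalso
        have : x ∈ D := Finset.mem_filter.mpr ⟨hx, h2.2⟩
        simp [hDne] at this
    exact hTn S hSub hScard hSanti hjH
  by_cases hEne : E = ∅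
  · have hjle : j ≤ q := by
      apply Finset.sup_le
      intro x hx
      by_contra hc
      have : x ∈ E := Finset.mem_filter.mpr ⟨hx, hc⟩
      simp [hEne] at this
    exact hjA (hmin j hjH (lt_of_le_of_ne hjle hjq))
  obtain ⟨f, hf⟩ := Finset.nonempty_iff_ne_empty.mpr hDne
  obtain ⟨w, hw⟩ := Finset.nonempty_iff_ne_empty.mpr hEne
  have hEmemS : ∀ x ∈ E, x ∈ S := fun x hx => (Finset.mem_filter.mp hx).1
  have hEnq : ∀ x ∈ E, ¬ x ≤ q := fun x hx => (Finset.mem_filter.mp hx).2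
  have hqnleE : ∀ x ∈ E, ¬ q ≤ x := by
    intro x hx hqx
    have hfq : f ≤ q := (Finset.mem_filter.mp hf).2
    have hfx : f ≠ x := fun e => hEnq x hx (e ▸ hfq)
    exact hSanti (Finset.mem_coe.mpr (Finset.mem_filter.mp hf).1)
      (Finset.mem_coe.mpr (hEmemS x hx)) hfx (le_trans hfq hqx)
  have hqE : q ∉ E := fun h => hEnq q h le_rfl
  have hES : ↑E ⊆ T := by
    intro x hx
    rcases hSsub (Finset.mem_coe.mpr (hEmemS x hx)) with h1 | h2
    · exact h1.1
    · exact absurd h2.2 (hEnq x hx)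
  set S₂ : Finset L := insert q E with hS₂
  have hS₂sub : ↑S₂ ⊆ T := by
    intro x hx
    rcases Finset.mem_insert.mp hx with h | h
    · exact h ▸ hqT
    · exact hES (Finset.mem_coe.mpr h)
  have hS₂card : 2 ≤ S₂.card := by
    rw [Finset.card_insert_of_notMem hqE]
    have : 1 ≤ E.card := Finset.card_pos.mpr ⟨w, hw⟩
    omega
  have hS₂anti : IsAntichain (· ≤ ·) (S₂ : Set L) := by
    intro a ha b hb hab hle
    rcases Finset.mem_insert.mp (Finset.mem_coe.mp ha) with ha' | ha' <;>
      rcases Finset.mem_insert.mp (Finset.mem_coe.mp hb) with hb' | hb'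
    · exact hab (ha'.trans hb'.symm)
    · exact hqnleE b hb' (ha' ▸ hle)
    · exact hEnq a ha' (hb' ▸ hle)
    · exact hSanti (Finset.mem_coe.mpr (hEmemS a ha')) (Finset.mem_coe.mpr (hEmemS b hb')) hab hle
  have hS₂sup : S₂.sup id ∉ H'' := hTn S₂ hS₂sub hS₂card hS₂anti
  have hsupS₂ : S₂.sup id = q ⊔ E.sup id := by
    rw [hS₂, Finset.sup_insert]; rfl
  have hjde : j = D.sup id ⊔ E.sup id := by
    rw [hj, ← Finset.sup_union, Finset.filter_union_filter_not_eq]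
  have hDleq : D.sup id ≤ q := Finset.sup_le fun x hx => (Finset.mem_filter.mp hx).2
  have hElej : E.sup id ≤ j := Finset.sup_le fun x hx => Finset.le_sup (f := id) (hEmemS x hx)
  by_cases hqj : q ≤ j
  · apply hS₂sup
    have h1 : S₂.sup id ≤ j := hsupS₂ ▸ sup_le hqj hElej
    have h2 : j ≤ S₂.sup id := by
      rw [hjde, hsupS₂]
      exact sup_le (le_trans hDleq le_sup_left) le_sup_right
    exact (le_antisymm h1 h2) ▸ hjH
  · have hfpos : ⊥ < f := hSpos f (Finset.mem_filter.mp hf).1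
    have hinf : q ⊓ j ≠ ⊥ := by
      intro e
      have : f ≤ q ⊓ j := le_inf (Finset.mem_filter.mp hf).2
        (Finset.le_sup (f := id) (Finset.mem_filter.mp hf).1)
      rw [e] at this
      exact hfpos.ne' (le_bot_iff.mp this)
    have hjoin : q ⊔ j ∈ G := hA q (hsubG hq) j (hsubG hjH) hinf
    have hjoinH : q ⊔ j ∈ H'' := hfilt j hjH hjA (q ⊔ j) hjoin le_sup_right
    apply hS₂sup
    have : q ⊔ j = S₂.sup id := by
      rw [hsupS₂, hjde, ← sup_assoc, sup_eq_left.mpr hDleq]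
    exact this ▸ hjoinH

lemma picomp_aux' {L : Type} [Lattice L] [BoundedOrder L] [Fintype L] [DecidableEq L]
    {G H : Set L}
    (hG1 : ∀ g ∈ G, ⊥ < g)
    (hA : ∀ g ∈ G, ∀ h ∈ G, g ⊓ h ≠ ⊥ → g ⊔ h ∈ G)
    (hHfilt : ∀ g ∈ H, ¬ IsAtom g → ∀ h ∈ G, g ≤ h → h ∈ H) :
    ∀ (l : List L) (H'' T : Set L),
      H'' ⊆ G → (∀ a : L, IsAtom a → a ∈ H'') →
      (∀ g ∈ H'', ¬ IsAtom g → ∀ h ∈ G, g ≤ h → h ∈ H'') →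
      H'' = H ∪ {x | x ∈ l} →
      (∀ x ∈ l, x ∉ H ∧ ¬ IsAtom x) →
      l.Nodup → l.Pairwise (fun a b => ¬ b < a) →
      T ⊆ H'' → IsNestedIn L H'' T →
      PiComp l T ⊆ H ∧ IsNestedIn L H (PiComp l T) := by
  intro l
  induction l with
  | nil =>
    intro H'' T hsubG hatoms hfilt heq hl hnd hpw hT hTn
    have hH : H'' = H := by
      rw [heq]
      simp
    rw [hH] at hT hTn
    exact ⟨hT, hTn⟩
  | cons q l' ih =>
    intro H'' T hsubG hatoms hfilt heq hl hnd hpw hT hTn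
    have hqmem : q ∈ H'' := by
      rw [heq]; right; exact List.mem_cons_self (a := q) (l := l')
    have hqH : q ∉ H := (hl q (List.mem_cons_self (a := q) (l := l'))).1
    have hqA : ¬ IsAtom q := (hl q (List.mem_cons_self (a := q) (l := l'))).2
    have hql' : q ∉ l' := (List.nodup_cons.mp hnd).1
    have hmin : ∀ x ∈ H'', x < q → IsAtom x := by
      intro x hx hxq
      by_contra hxA
      rw [heq] at hx
      rcases hx with hx | hx
      · exact hqH (hHfilt x hx hxA q (hsubG hqmem) hxq.le)
      · rcases List.mem_cons.mp hx with rfl | hx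
        · exact lt_irrefl x hxq
        · exact (List.pairwise_cons.mp hpw).1 x hx hxq
    obtain ⟨hstep1, hstep2⟩ := step_lemma' hG1 hA hsubG hatoms hfilt hqmem hqA hmin hT hTn
    have hPC : PiComp (q :: l') T = PiComp l' (PiStep q T) := rfl
    rw [hPC]
    apply ih (H'' \ {q}) (PiStep q T)
    · exact fun x hx => hsubG hx.1
    · exact fun a ha => ⟨hatoms a ha, fun e => hqA ((Set.mem_singleton_iff.mp e) ▸ ha)⟩
    · intro g hg hgA h hh hgh
      refine ⟨hfilt g hg.1 hgA h hh hgh, ?_⟩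
      intro e
      rw [Set.mem_singleton_iff] at e
      subst e
      rcases lt_or_eq_of_le hgh with h1 | h1
      · exact hgA (hmin g hg.1 h1)
      · exact hg.2 (Set.mem_singleton_iff.mpr h1)
    · ext x
      simp only [Set.mem_diff, Set.mem_singleton_iff, heq, Set.mem_union, Set.mem_setOf_eq,
        List.mem_cons]
      constructor
      · rintro ⟨h1 | h1, h2⟩
        · exact Or.inl h1
        · rcases h1 with rfl | h1
          · exact absurd rfl h2
          · exact Or.inr h1
      · rintro (h1 | h1)
        · exact ⟨Or.inl h1, fun e => hqH (e ▸ h1)⟩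
        · exact ⟨Or.inr (Or.inr h1), fun e => hql' (e ▸ h1)⟩
    · exact fun x hx => hl x (List.mem_cons_of_mem q hx)
    · exact (List.nodup_cons.mp hnd).2
    · exact (List.pairwise_cons.mp hpw).2
    · exact hstep1
    · exact hstep2

theorem PiComp_nested {L : Type} [Lattice L] [BoundedOrder L] [Fintype L] [DecidableEq L]
    (hgeo : IsGeomLat L) (G : Set L) (hG : IsBuildingSet L G) (htop : ⊤ ∈ G)
    (H H' : Set L) (hH : IsPartialBuilding L G H) (hH' : IsPartialBuilding L G H')
    (hsub : H ⊆ H')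
    (l : List L) (hmem : ∀ q, q ∈ l ↔ q ∈ H' \ H) (hnd : l.Nodup)
    (hord : ∀ i j : Fin l.length, l.get i < l.get j → i < j)
    (S : Set L) (hS : S ⊆ H') (hnest : IsNestedIn L H' S) :
    PiComp l S ⊆ H ∧ IsNestedIn L H (PiComp l S) := by
  classical
  have hA : ∀ g ∈ G, ∀ h ∈ G, g ⊓ h ≠ ⊥ → g ⊔ h ∈ G :=
    fun g hg h hh hne => join_mem_of_inf_ne_bot' hG hg hh hne
  have hpw : l.Pairwise (fun a b => ¬ b < a) := by
    rw [List.pairwise_iff_get]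
    intro i j hij hlt
    exact absurd (hord j i hlt) (by omega)
  have hl : ∀ x ∈ l, x ∉ H ∧ ¬ IsAtom x := by
    intro x hx
    have hx' := (hmem x).mp hx
    exact ⟨hx'.2, fun ha => hx'.2 (hH.2.1 ha)⟩
  have heq : H' = H ∪ {x | x ∈ l} := by
    ext x
    simp only [Set.mem_union, Set.mem_setOf_eq, hmem x, Set.mem_diff]
    constructor
    · intro hx
      by_cases hxH : x ∈ H
      · exact Or.inl hxH
      · exact Or.inr ⟨hx, hxH⟩
    · rintro (hx | hx)
      · exact hsub hx
      · exact hx.1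
  exact picomp_aux' hG.1 hA hH.2.2 l H' S hH'.1
    (fun a ha => hH'.2.1 ha) hH'.2.2 heq hl hnd hpw hS hnest
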